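/- The ideal space Idl(A) of all ideals of a commutative ring A with identity, endowed with the coarse lower topology, is a spectral space: it is quasi-compact, sober, and has a basis of quasi-compact open sets that is closed under finite intersections. -/

import Mathlib

open TopologicalSpace Topology Filter Set

open scoped Classical

/-- `v(I)`: the set of all ideals containing `I`. -/
def vSet {A : Type*} [CommRing A] (I : Ideal A) : Set (Ideal A) := {S : Ideal A | I ≤ S}

/-- The coarse lower topology on the set `Idl(A)` of all ideals of `A`: the topology with
closed subbase `{v(I) : I ∈ Idl(A)}`, i.e. generated by the open sets `v(I)ᶜ`. -/
instance coarseLower (A : Type*) [CommRing A] : TopologicalSpace (Ideal A) :=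
  generateFrom {U : Set (Ideal A) | ∃ I : Ideal A, U = (vSet I)ᶜ}

/-- `Prp(A)`: the proper ideals of `A`, with the subspace topology from `Idl(A)`. -/
abbrev Prp (A : Type*) [CommRing A] : Type _ := {I : Ideal A // I ≠ ⊤}

section Aux

variable {A : Type*} [CommRing A]

/-- The coarse lower topology is the lower topology. -/
instance instIsLowerIdeal : Topology.IsLower (Ideal A) := by
  constructor
  show coarseLower A = Topology.lower (Ideal A)
  unfold coarseLower Topology.lower
  congr 1
  ext s
  exact ⟨fun ⟨I, h⟩ => ⟨I, h.symm⟩, fun ⟨I, h⟩ => ⟨I, h.symm⟩⟩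

/-- Every ultrafilter converges to the sup of the `a` with `Ici a` in it. -/
lemma ultra_le_nhds (f : Ultrafilter (Ideal A)) :
    (f : Filter (Ideal A)) ≤ nhds (sSup {a : Ideal A | Set.Ici a ∈ f}) := by
  set x := sSup {a : Ideal A | Set.Ici a ∈ f} with hx
  refine (nhds_basis_opens x).ge_iff.mpr ?_
  rintro U ⟨hxU, hU⟩
  have h := Topology.IsLower.isOpen_iff_generate_Ici_compl.1 hU
  clear hU
  induction h with
  | basic u hu =>
      obtain ⟨a, rfl⟩ := hu
      have : Set.Ici a ∉ f := by
        intro hmem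
        exact hxU (show a ≤ x from le_sSup hmem)
      simpa using Ultrafilter.compl_mem_iff_notMem.mpr this
  | univ => exact Filter.univ_mem
  | inter u v _ _ ihu ihv =>
      exact Filter.inter_mem (ihu hxU.1) (ihv hxU.2)
  | sUnion S _ ih =>
      obtain ⟨u, huS, hxu⟩ := hxU
      exact Filter.mem_of_superset (ih u huS hxu) (Set.subset_sUnion_of_mem huS)

/-- The basic open set associated to a finite set of finitely generated ideals is compact. -/
lemma isCompact_basic (F : Finset (Ideal A)) (hFG : ∀ J ∈ F, J.FG) :
    IsCompact {S : Ideal A | ∀ J ∈ F, ¬ J ≤ S} := by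
  rw [isCompact_iff_ultrafilter_le_nhds]
  intro f hf
  rw [Filter.le_principal_iff] at hf
  refine ⟨sSup {a : Ideal A | Set.Ici a ∈ f}, ?_, ultra_le_nhds f⟩
  intro J hJ hle
  have hc : IsCompactElement J := (Submodule.fg_iff_compact J).mp (hFG J hJ)
  obtain ⟨t, hts, hle'⟩ := (CompleteLattice.isCompactElement_iff_exists_le_sSup_of_le_sSup (k := J)).mp hc _ hle
  have h1 : Set.Ici (t.sup id) ∈ f := by
    have heq : Set.Ici (t.sup id) = ⋂ a ∈ t, Set.Ici a := by
      ext S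
      simp [Finset.sup_le_iff]
    rw [heq]
    exact (Filter.biInter_finset_mem t).mpr fun a ha => hts ha
  have h2 : Set.Ici J ∈ f := Filter.mem_of_superset h1 fun S hS => le_trans hle' hS
  obtain ⟨S, hS1, hS2⟩ := Ultrafilter.nonempty_of_mem (Filter.inter_mem hf h2)
  exact hS1 J hJ hS2

/-- `Idl(A)` is quasi-compact. -/
lemma idl_compactSpace : CompactSpace (Ideal A) := by
  constructor
  have h := isCompact_basic (A := A) ∅ (by simp)
  simpa using h

/-- `Idl(A)` is quasi-sober. -/
lemma idl_quasiSober : QuasiSober (Ideal A) := by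
  constructor
  intro S hirr hcl
  have hmem : sInf S ∈ S := by
    by_contra h
    obtain ⟨U, hUB, hxU, hUsub⟩ :=
      Topology.IsLower.isTopologicalBasis.exists_subset_of_mem_open (show sInf S ∈ Sᶜ from h)
        hcl.isOpen_compl
    obtain ⟨t, htf, rfl⟩ := hUB
    have hsub : S ⊆ ⋃ a ∈ t, Set.Ici a := by
      rw [← coe_upperClosure]
      intro s hs
      by_contra hns
      exact (hUsub hns) hs
    have hbig := isIrreducible_iff_sUnion_isClosed.1 hirr
      (htf.toFinset.image fun a => Set.Ici a)
      (by
        intro z hz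
        simp only [Finset.mem_image] at hz
        obtain ⟨a, _, rfl⟩ := hz
        exact isClosed_Ici)
      (by
        intro s hs
        obtain ⟨a, ha, has⟩ := Set.mem_iUnion₂.1 (hsub hs)
        refine ⟨Set.Ici a, ?_, has⟩
        simp only [Finset.coe_image, Set.mem_image, Finset.mem_coe, Set.Finite.mem_toFinset]
        exact ⟨a, ha, rfl⟩)
    obtain ⟨z, hz, hSz⟩ := hbig
    simp only [Finset.mem_image, Set.Finite.mem_toFinset] at hz
    obtain ⟨a, hat, rfl⟩ := hz
    have hle : a ≤ sInf S := le_sInf fun s hs => hSz hs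
    have : sInf S ∈ (upperClosure t : Set (Ideal A)) := by
      rw [coe_upperClosure]
      exact Set.mem_iUnion₂.2 ⟨a, hat, hle⟩
    exact hxU this
  refine ⟨sInf S, ?_⟩
  show closure {sInf S} = S
  apply subset_antisymm
  · calc closure {sInf S} ⊆ closure S := closure_mono (Set.singleton_subset_iff.mpr hmem)
      _ = S := hcl.closure_eq
  · rw [Topology.IsLower.closure_singleton]
    exact fun s hs => sInf_le hs

/-- The candidate basis: complements of upper sets of finite families of principal ideals,
indexed by finite sets of ring elements. -/
def idlBasis (A : Type*) [CommRing A] : Set (Set (Ideal A)) :=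
  {U : Set (Ideal A) | ∃ G : Finset A, U = {S : Ideal A | ∀ g ∈ G, g ∉ S}}

lemma idlBasis_isOpen {U : Set (Ideal A)} (hU : U ∈ idlBasis A) : IsOpen U := by
  obtain ⟨G, rfl⟩ := hU
  have heq : {S : Ideal A | ∀ g ∈ G, g ∉ S} = ⋂ g ∈ G, (Set.Ici (Ideal.span {g}))ᶜ := by
    ext S
    simp [Ideal.span_singleton_le_iff_mem]
  rw [heq]
  exact isOpen_biInter_finset fun g _ => isClosed_Ici.isOpen_compl

lemma idlBasis_isCompact {U : Set (Ideal A)} (hU : U ∈ idlBasis A) : IsCompact U := by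
  obtain ⟨G, rfl⟩ := hU
  have heq : {S : Ideal A | ∀ g ∈ G, g ∉ S}
      = {S : Ideal A | ∀ J ∈ G.image (fun g => Ideal.span {g}), ¬ J ≤ S} := by
    ext S
    simp [Finset.mem_image, Ideal.span_singleton_le_iff_mem]
  rw [heq]
  exact isCompact_basic _ (by
    intro J hJ
    simp only [Finset.mem_image] at hJ
    obtain ⟨g, _, rfl⟩ := hJ
    exact ⟨{g}, by simp⟩)

lemma idlBasis_isBasis : IsTopologicalBasis (idlBasis A) := by
  refine isTopologicalBasis_of_isOpen_of_nhds (fun u hu => idlBasis_isOpen hu) ?_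
  intro x O hxO hO
  obtain ⟨U, hUB, hxU, hUsub⟩ :=
    Topology.IsLower.isTopologicalBasis.exists_subset_of_mem_open hxO hO
  obtain ⟨t, htf, rfl⟩ := hUB
  have htsub : Finite t := htf.to_subtype
  have hx : ∀ a : t, ¬ (a : Ideal A) ≤ x := by
    rintro ⟨a, ha⟩ hax
    exact hxU (by rw [coe_upperClosure]; exact Set.mem_iUnion₂.2 ⟨a, ha, hax⟩)
  have hchoose : ∀ a : t, ∃ y, y ∈ (a : Ideal A) ∧ y ∉ x := by
    intro a
    exact SetLike.not_le_iff_exists.1 (hx a)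
  choose g hg1 hg2 using hchoose
  refine ⟨{S : Ideal A | ∀ y ∈ (Set.finite_range g).toFinset, y ∉ S}, ⟨_, rfl⟩, ?_, ?_⟩
  · intro y hy
    simp only [Set.Finite.mem_toFinset, Set.mem_range] at hy
    obtain ⟨a, rfl⟩ := hy
    exact hg2 a
  · refine subset_trans ?_ hUsub
    intro S hS hSu
    rw [coe_upperClosure] at hSu
    obtain ⟨a, hat, haS⟩ := Set.mem_iUnion₂.1 hSu
    exact hS (g ⟨a, hat⟩) (by simp) (haS (hg1 ⟨a, hat⟩))

lemma idlBasis_inter {U V : Set (Ideal A)} (hU : U ∈ idlBasis A) (hV : V ∈ idlBasis A) :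
    U ∩ V ∈ idlBasis A := by
  obtain ⟨G, rfl⟩ := hU
  obtain ⟨G', rfl⟩ := hV
  refine ⟨G ∪ G', ?_⟩
  ext S
  simp only [Set.mem_inter_iff, Set.mem_setOf_eq, Finset.mem_union]
  constructor
  · rintro ⟨h1, h2⟩ g (hg | hg)
    · exact h1 g hg
    · exact h2 g hg
  · intro h
    exact ⟨fun g hg => h g (Or.inl hg), fun g hg => h g (Or.inr hg)⟩

end Aux

/-- The ideal space `Idl(A)` with the coarse lower topology is spectral: quasi-compact,
sober (T₀ and quasi-sober), with a basis of quasi-compact open sets closed under finite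
intersections. -/
theorem idl_isSpectral (A : Type*) [CommRing A] :
    CompactSpace (Ideal A) ∧ T0Space (Ideal A) ∧ QuasiSober (Ideal A) ∧
      ∃ B : Set (Set (Ideal A)), IsTopologicalBasis B ∧
        (∀ U ∈ B, IsOpen U ∧ IsCompact U) ∧
        (∀ U ∈ B, ∀ V ∈ B, U ∩ V ∈ B) := by
  refine ⟨idl_compactSpace, inferInstance, idl_quasiSober, idlBasis A, idlBasis_isBasis,
    fun U hU => ⟨idlBasis_isOpen hU, idlBasis_isCompact hU⟩,
    fun U hU V hV => idlBasis_inter hU hV⟩
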